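/- Let $\epsilon \geq 0$, $\ell \geq 1$, and $a_1,\dots,a_\ell \geq 1$ with $k = \prod_{i=1}^\ell a_i$. If a total weight $W > 0$ is recursively partitioned along the hierarchy, where at each level $i$ (from $\ell$ down to $1$) each block of weight $W'$ at depth $d$ (with $k' = a_1 \cdots a_d$ remaining sub-blocks) is split into $a_d$ parts each of weight at most $(1+\epsilon') W'/a_d$ with $\epsilon' = ((1+\epsilon)\frac{k' W}{k W'})^{1/d} - 1$, then every final block has weight at most $(1+\epsilon)W/k$. -/

import Mathlib

/-- Hierarchical multisection with adaptive imbalance: along any root-to-leaf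
path of the hierarchy, if each block at depth `d` (weight `Wt d`) is split into
`a (d-1)` parts each of weight at most `(1+ε') * Wt d / a (d-1)` with the
adaptive imbalance `ε' = ((1+ε) * (k' * W) / (k * Wt d))^(1/d) - 1`
(`k' = a_1 ⋯ a_d`), then the final block has weight at most `(1+ε) * W / k`. -/
theorem adaptive_imbalance_balanced
    (ℓ : ℕ) (hℓ : 1 ≤ ℓ) (a : ℕ → ℕ) (ha : ∀ i, 1 ≤ a i)
    (ε W : ℝ) (hε : 0 ≤ ε) (hW : 0 < W)
    (k : ℕ) (hk : k = ∏ i ∈ Finset.range ℓ, a i)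
    (Wt : ℕ → ℝ) (hWtop : Wt ℓ = W) (hWpos : ∀ d, 0 < Wt d)
    (hstep : ∀ d, 1 ≤ d → d ≤ ℓ →
      Wt (d - 1) ≤
        (1 + ((((1 + ε) * ((∏ i ∈ Finset.range d, a i : ℕ) * W) / (k * Wt d)) ^
          ((1 : ℝ) / d)) - 1)) * Wt d / a (d - 1)) :
    Wt 0 ≤ (1 + ε) * W / k := by
  have hkpos : 0 < k := by
    rw [hk]
    exact Finset.prod_pos fun i _ => ha i
  have hkR : (0 : ℝ) < (k : ℝ) := by exact_mod_cast hkpos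
  set P : ℕ → ℝ := fun d => ((∏ i ∈ Finset.range d, a i : ℕ) : ℝ) with hP
  have hPpos : ∀ d, 0 < P d := by
    intro d
    have h : 0 < ∏ i ∈ Finset.range d, a i := Finset.prod_pos fun i _ => ha i
    simp only [hP]
    exact_mod_cast h
  set B : ℕ → ℝ := fun d => (1 + ε) * (P d * W) / k with hB
  have hBpos : ∀ d, 0 < B d := by
    intro d
    apply div_pos _ hkR
    have h1 : 0 < P d * W := mul_pos (hPpos d) hW
    nlinarith
  have key : ∀ m, m ≤ ℓ → Wt (ℓ - m) ≤ B (ℓ - m) := by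
    intro m
    induction m with
    | zero =>
      intro _
      simp only [Nat.sub_zero, hWtop, hB]
      have hPk : P ℓ = (k : ℝ) := by
        simp only [hP]; exact_mod_cast hk.symm
      rw [hPk, le_div_iff₀ hkR]
      nlinarith [mul_pos hkR hW]
    | succ m ih =>
      intro hm
      have hmℓ : m ≤ ℓ := Nat.le_of_succ_le hm
      have ihm := ih hmℓ
      set d := ℓ - m with hd
      have hd1 : 1 ≤ d := by omega
      have hdℓ : d ≤ ℓ := Nat.sub_le _ _
      have hsub : ℓ - (m + 1) = d - 1 := by omega
      rw [hsub]
      have hWd := hWpos d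
      -- the ratio r = B d / Wt d
      set r : ℝ := (1 + ε) * (P d * W) / (k * Wt d) with hrdef
      have hrB : r = B d / Wt d := by
        rw [eq_div_iff hWd.ne', hrdef, div_mul_eq_mul_div, mul_div_mul_right _ _ hWd.ne', hB]
      have hr1 : 1 ≤ r := by
        rw [hrB, le_div_iff₀ hWd, one_mul]
        exact ihm
      have hrpow : r ^ ((1 : ℝ) / d) ≤ r := by
        nth_rewrite 2 [show r = r ^ (1 : ℝ) by rw [Real.rpow_one]]
        apply Real.rpow_le_rpow_of_exponent_le hr1
        have hdpos : (0 : ℝ) < (d : ℝ) := by exact_mod_cast hd1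
        rw [div_le_one hdpos]
        exact_mod_cast hd1
      have hstep' := hstep d hd1 hdℓ
      have haR : (0 : ℝ) < (a (d - 1) : ℝ) := by exact_mod_cast ha (d - 1)
      have h1 : Wt (d - 1) ≤ r * Wt d / a (d - 1) := by
        calc Wt (d - 1) ≤ (1 + (r ^ ((1 : ℝ) / d) - 1)) * Wt d / a (d - 1) := hstep'
          _ = r ^ ((1 : ℝ) / d) * Wt d / a (d - 1) := by ring_nf
          _ ≤ r * Wt d / a (d - 1) := by
              have hmul : r ^ ((1 : ℝ) / d) * Wt d ≤ r * Wt d :=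
                mul_le_mul_of_nonneg_right hrpow hWd.le
              exact (div_le_div_iff_of_pos_right haR).mpr hmul
      have hrw : r * Wt d = B d := by
        rw [hrB]; field_simp
      have hdd : d - 1 + 1 = d := by omega
      have hPd : P d = P (d - 1) * a (d - 1) := by
        simp only [hP]
        rw [← hdd, Finset.prod_range_succ]
        push_cast; ring
      have hBd : B d / a (d - 1) = B (d - 1) := by
        simp only [hB]
        rw [hPd]
        field_simp
      calc Wt (d - 1) ≤ r * Wt d / a (d - 1) := h1
        _ = B d / a (d - 1) := by rw [hrw]
        _ = B (d - 1) := hBd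
  have h0 := key ℓ le_rfl
  simpa [hB, hP] using h0
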